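/- Let n ≥ 1 and let V = W/√2^q be an n × n unitary matrix, where W is a matrix with entries in the Gaussian integers ℤ[i] and q ∈ ℕ. Then there exist finitely many generators G₁, …, G_ℓ, each taken from the set {i_[a], X_[a,b], (ωH)_[a,b] : a, b distinct elements of {1,…,n}} ∪ {ω·I_n}, such that G₁ ⋯ G_ℓ V = I. -/

import Mathlib

open Matrix Complex

noncomputable section

/-- The `m`-level operator of type `W` with indices `f 0, …, f (m-1)`:
for injective `f`, its `(f j', f k')` entry is `W j' k'` and it agrees
with the identity matrix elsewhere. -/
def levelOp {n m : ℕ} (f : Fin m → Fin n) (W : Matrix (Fin m) (Fin m) ℂ) :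
    Matrix (Fin n) (Fin n) ℂ := fun j k =>
  (∑ j' : Fin m, ∑ k' : Fin m, if f j' = j ∧ f k' = k then W j' k' else 0) +
  (if j = k ∧ ∀ j' : Fin m, f j' ≠ j then 1 else 0)

/-- The NOT gate `X`. -/
def Xmat : Matrix (Fin 2) (Fin 2) ℂ := !![0, 1; 1, 0]

/-- The Hadamard gate `H`. -/
def Hmat : Matrix (Fin 2) (Fin 2) ℂ := (Real.sqrt 2 : ℂ)⁻¹ • !![1, 1; 1, -1]

/-- The gate `ωH = ((1+i)/2)[[1,1],[1,-1]]`, where `ω = e^{iπ/4}`. -/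
def omegaHmat : Matrix (Fin 2) (Fin 2) ℂ :=
  ((1 + Complex.I) / 2) • !![1, 1; 1, -1]

/-- `G` is one of the generators `i_[a]`, `X_[a,b]`, `(ωH)_[a,b]` with `a ≠ b`. -/
def IsGaussGen {n : ℕ} (G : Matrix (Fin n) (Fin n) ℂ) : Prop :=
  (∃ a : Fin n, G = levelOp ![a] !![Complex.I]) ∨
  (∃ a b : Fin n, a ≠ b ∧ G = levelOp ![a, b] Xmat) ∨
  (∃ a b : Fin n, a ≠ b ∧ G = levelOp ![a, b] omegaHmat)

/-- `G` is one of the generators `i_[a]`, `X_[a,b]`, `(ωH)_[a,b]`, or the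
scalar matrix `ω·I_n` where `ω = e^{iπ/4} = (1+i)/√2`. -/
def IsGaussGenOmega {n : ℕ} (G : Matrix (Fin n) (Fin n) ℂ) : Prop :=
  IsGaussGen G ∨ G = ((1 + Complex.I) / (Real.sqrt 2 : ℂ)) • (1 : Matrix (Fin n) (Fin n) ℂ)

namespace GaussDev

noncomputable abbrev s2 : ℂ := (Real.sqrt 2 : ℂ)

noncomputable def wo : ℂ := (1 + Complex.I) / s2

lemma s2_mul_self : s2 * s2 = 2 := by
  rw [← Complex.ofReal_mul, Real.mul_self_sqrt (by norm_num)]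
  norm_num

lemma s2_ne_zero : s2 ≠ 0 := by
  simp only [ne_eq, Complex.ofReal_eq_zero]
  positivity

lemma s2_sq : s2 ^ 2 = 2 := by rw [pow_two, s2_mul_self]

lemma wo_sq : wo ^ 2 = Complex.I := by
  rw [wo, div_pow, s2_sq]
  have h : (1 + Complex.I)^2 = 2 * Complex.I := by linear_combination Complex.I_sq
  rw [h]
  ring

lemma wo_ne_zero : wo ≠ 0 := by
  rw [wo, div_ne_zero_iff]
  constructor
  · intro h
    have := congrArg Complex.im h
    simp at this
  · exact s2_ne_zero

lemma wo_pow8 : wo ^ 8 = 1 := by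
  have : wo ^ 8 = (wo ^ 2) ^ 4 := by ring
  rw [this, wo_sq]
  simp [pow_succ, Complex.I_mul_I]

lemma I_pow_mul_wo_pow (t : ℕ) : Complex.I ^ (3 * (t / 2)) * wo ^ t = wo ^ (t % 2) := by
  have hI : Complex.I = wo ^ 2 := wo_sq.symm
  rw [hI, ← pow_mul, ← pow_add]
  have h2 : 2 * (3 * (t / 2)) + t = 8 * (t / 2) + t % 2 := by omega
  rw [h2, pow_add, pow_mul, wo_pow8, one_pow, one_mul]

/-- √2^Q is not a Gaussian integer when Q is odd. -/
lemma s2_pow_odd_ne (Q : ℕ) (hQ : Q % 2 = 1) (a b : ℤ) :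
    s2 ^ Q ≠ (a : ℂ) + (b : ℂ) * Complex.I := by
  intro h
  obtain ⟨m, hm⟩ : ∃ m, Q = 2 * m + 1 := ⟨Q / 2, by omega⟩
  have hre : Real.sqrt 2 ^ Q = (a : ℝ) := by
    have := congrArg Complex.re h
    simpa [← Complex.ofReal_pow] using this
  have h2 : Real.sqrt 2 ^ Q = 2 ^ m * Real.sqrt 2 := by
    rw [hm, pow_add, pow_mul, Real.sq_sqrt (by norm_num : (2:ℝ) ≥ 0)]
    ring
  have hs : Real.sqrt 2 = (a : ℝ) / 2 ^ m := by
    rw [h2] at hre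
    field_simp at hre ⊢
    linarith
  have : Irrational (Real.sqrt 2) := irrational_sqrt_two
  rw [hs] at this
  have : Irrational ((a : ℝ) / ((2:ℕ) ^ m : ℕ)) := by push_cast; exact this
  exact (Rat.not_irrational _) (by
    have := this
    rw [show ((a:ℝ) / ((2:ℕ)^m : ℕ)) = ((a / ((2:ℕ)^m) : ℚ) : ℝ) by push_cast; ring] at this
    exact this)

/-- parity determination: if √2^Q · ω^t is a Gaussian integer and t ≤ 1, then t = Q % 2. -/
lemma parity_det (Q t : ℕ) (ht : t ≤ 1) (a b : ℤ)
    (h : s2 ^ Q * wo ^ t = (a : ℂ) + (b : ℂ) * Complex.I) : t = Q % 2 := by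
  interval_cases t
  · simp only [pow_zero, mul_one] at h
    rcases Nat.even_or_odd Q with he | ho
    · have := Nat.even_iff.mp he; omega
    · exact absurd h (s2_pow_odd_ne Q (Nat.odd_iff.mp ho) a b)
  · -- √2^(Q+1) = (a+b) + (b-a) I
    have key : s2 ^ (Q + 1) = ((a + b : ℤ) : ℂ) + ((b - a : ℤ) : ℂ) * Complex.I := by
      have h1 : s2 ^ Q * wo * (1 - Complex.I) * s2 = ((a:ℂ) + b * Complex.I) * (1 - Complex.I) * s2 := by
        rw [pow_one] at h; rw [h]
      have h2 : wo * (1 - Complex.I) * s2 = 2 := by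
        rw [wo, div_mul_eq_mul_div, div_mul_eq_mul_div, div_eq_iff s2_ne_zero]
        linear_combination (-s2) * Complex.I_sq
      calc s2 ^ (Q + 1) = s2 ^ Q * s2 := by ring
        _ = s2 ^ Q * (wo * (1 - Complex.I) * s2) * s2 / 2 := by
              rw [h2]; field_simp
        _ = ((a:ℂ) + b * Complex.I) * (1 - Complex.I) * s2 * s2 / 2 := by
              rw [← h1]; ring
        _ = ((a:ℂ) + b * Complex.I) * (1 - Complex.I) * 2 / 2 := by
              rw [mul_assoc _ s2 s2, s2_mul_self]
        _ = ((a + b : ℤ) : ℂ) + ((b - a : ℤ) : ℂ) * Complex.I := by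
              push_cast
              linear_combination (-(b:ℂ)) * Complex.I_sq
    rcases Nat.even_or_odd Q with he | ho
    · have h0 := Nat.even_iff.mp he
      exact absurd key (s2_pow_odd_ne (Q+1) (by omega) _ _)
    · have := Nat.odd_iff.mp ho; omega

end GaussDev
namespace GaussDev
variable {n : ℕ}

lemma levelOp1_apply (a : Fin n) (z : ℂ) (j k : Fin n) :
    levelOp ![a] !![z] j k =
      if a = j then (if a = k then z else 0) else (if j = k then 1 else 0) := by
  have hz : !![z] 0 0 = z := rfl
  simp only [levelOp, Fin.sum_univ_one, Fin.forall_fin_one, Matrix.cons_val_zero, ne_eq, hz]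
  by_cases h1 : a = j <;> by_cases h2 : a = k <;> by_cases h3 : j = k <;> simp_all

lemma levelOp2_apply (a b : Fin n) (hab : a ≠ b) (W : Matrix (Fin 2) (Fin 2) ℂ) (j k : Fin n) :
    levelOp ![a, b] W j k =
      if a = j then (if a = k then W 0 0 else if b = k then W 0 1 else 0)
      else if b = j then (if a = k then W 1 0 else if b = k then W 1 1 else 0)
      else (if j = k then 1 else 0) := by
  simp only [levelOp, Fin.sum_univ_two, Fin.forall_fin_two, Matrix.cons_val_zero,
    Matrix.cons_val_one, Matrix.head_cons, ne_eq]
  by_cases h1 : a = j <;> by_cases h2 : b = j <;> by_cases h3 : a = k <;>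
    by_cases h4 : b = k <;> by_cases h5 : j = k <;> simp_all

lemma sum_pair {a b : Fin n} (hab : a ≠ b) (x y : Fin n → ℂ) :
    (∑ l : Fin n, (if a = l then x l else if b = l then y l else 0)) = x a + y b := by
  have : (fun l : Fin n => if a = l then x l else if b = l then y l else 0) =
      fun l => (if a = l then x l else 0) + (if b = l then y l else 0) := by
    funext l
    by_cases h1 : a = l <;> by_cases h2 : b = l <;> simp_all
  rw [this, Finset.sum_add_distrib, Finset.sum_ite_eq, Finset.sum_ite_eq]
  simp

lemma sum_diag (j : Fin n) (v : Fin n → ℂ) :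
    (∑ k : Fin n, (if j = k then (1:ℂ) else 0) * v k) = v j := by
  have : ∀ k : Fin n, (if j = k then (1:ℂ) else 0) * v k = if j = k then v k else 0 := by
    intro k; split_ifs <;> simp
  rw [Finset.sum_congr rfl fun k _ => this k, Finset.sum_ite_eq]
  simp

lemma igate_mulVec (a : Fin n) (z : ℂ) (v : Fin n → ℂ) :
    (levelOp ![a] !![z]) *ᵥ v = Function.update v a (z * v a) := by
  funext j
  simp only [Matrix.mulVec, dotProduct, levelOp1_apply]
  by_cases h : a = j
  · subst h
    simp only [eq_self_iff_true, if_true, Function.update_self, ite_mul, zero_mul]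
    rw [Finset.sum_ite_eq]
    simp
  · rw [Function.update_of_ne (fun hh => h hh.symm)]
    simp only [if_neg h]
    exact sum_diag j v

lemma gate2_mulVec (a b : Fin n) (hab : a ≠ b) (W : Matrix (Fin 2) (Fin 2) ℂ) (v : Fin n → ℂ) :
    (levelOp ![a, b] W) *ᵥ v = fun j =>
      if a = j then W 0 0 * v a + W 0 1 * v b
      else if b = j then W 1 0 * v a + W 1 1 * v b
      else v j := by
  funext j
  simp only [Matrix.mulVec, dotProduct, levelOp2_apply a b hab]
  by_cases h1 : a = j
  · simp only [if_pos h1, ite_mul, zero_mul]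
    exact sum_pair hab _ _
  · by_cases h2 : b = j
    · simp only [if_neg h1, if_pos h2, ite_mul, zero_mul]
      exact sum_pair hab _ _
    · simp only [if_neg h1, if_neg h2]
      exact sum_diag j v

lemma mul_apply_col (P M : Matrix (Fin n) (Fin n) ℂ) (j k : Fin n) :
    (P * M) j k = (P *ᵥ (fun r => M r k)) j := by
  simp [Matrix.mul_apply, Matrix.mulVec, dotProduct]

lemma igate_mul (a : Fin n) (z : ℂ) (M : Matrix (Fin n) (Fin n) ℂ) :
    levelOp ![a] !![z] * M = fun j k => if a = j then z * M a k else M j k := by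
  ext j k
  rw [mul_apply_col, igate_mulVec, Function.update_apply]
  by_cases h : j = a
  · subst h; simp
  · rw [if_neg (Ne.symm h), if_neg h]

lemma gate2_mul (a b : Fin n) (hab : a ≠ b) (W : Matrix (Fin 2) (Fin 2) ℂ)
    (M : Matrix (Fin n) (Fin n) ℂ) :
    levelOp ![a, b] W * M = fun j k =>
      if a = j then W 0 0 * M a k + W 0 1 * M b k
      else if b = j then W 1 0 * M a k + W 1 1 * M b k
      else M j k := by
  ext j k
  rw [mul_apply_col, gate2_mulVec a b hab]

end GaussDev
namespace GaussDev
variable {n : ℕ}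

noncomputable def igate (a : Fin n) : Matrix (Fin n) (Fin n) ℂ := levelOp ![a] !![Complex.I]
noncomputable def xgate (a b : Fin n) : Matrix (Fin n) (Fin n) ℂ := levelOp ![a, b] Xmat
noncomputable def hgate (a b : Fin n) : Matrix (Fin n) (Fin n) ℂ := levelOp ![a, b] omegaHmat

lemma X00 : Xmat 0 0 = 0 := rfl
lemma X01 : Xmat 0 1 = 1 := rfl
lemma X10 : Xmat 1 0 = 1 := rfl
lemma X11 : Xmat 1 1 = 0 := rfl
lemma OH00 : omegaHmat 0 0 = (1 + Complex.I)/2 := by simp [omegaHmat]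
lemma OH01 : omegaHmat 0 1 = (1 + Complex.I)/2 := by simp [omegaHmat]
lemma OH10 : omegaHmat 1 0 = (1 + Complex.I)/2 := by simp [omegaHmat]
lemma OH11 : omegaHmat 1 1 = -((1 + Complex.I)/2) := by simp [omegaHmat]

lemma star_igate (a : Fin n) : star (igate a) = levelOp ![a] !![-Complex.I] := by
  ext j k
  rw [Matrix.star_apply, igate, levelOp1_apply, levelOp1_apply]
  by_cases h1 : a = j <;> by_cases h2 : a = k <;> by_cases h3 : j = k <;>
    (try simp_all [Complex.star_def, Complex.conj_I]) <;>
    first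
      | ring1
      | (intro hh; subst hh; simp_all)

lemma igate_unitary (a : Fin n) : igate a * star (igate a) = 1 := by
  rw [star_igate, igate, igate_mul]
  ext j k
  simp only [levelOp1_apply, Matrix.one_apply]
  by_cases h1 : a = j <;> by_cases h2 : a = k <;> by_cases h3 : j = k <;>
    simp_all [Complex.I_mul_I]

lemma star_xgate (a b : Fin n) (hab : a ≠ b) : star (xgate a b) = xgate a b := by
  ext j k
  rw [Matrix.star_apply, xgate, levelOp2_apply a b hab, levelOp2_apply a b hab]
  by_cases h1 : a = j <;> by_cases h2 : b = j <;> by_cases h3 : a = k <;>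
    by_cases h4 : b = k <;> by_cases h5 : j = k <;>
    (try simp_all [X00, X01, X10, X11]) <;>
    first
      | ring1
      | (intro hh; subst hh; simp_all)

lemma xgate_unitary (a b : Fin n) (hab : a ≠ b) : xgate a b * star (xgate a b) = 1 := by
  rw [star_xgate a b hab, xgate, gate2_mul a b hab]
  ext j k
  simp only [levelOp2_apply a b hab, Matrix.one_apply, X00, X01, X10, X11]
  by_cases h1 : a = j <;> by_cases h2 : b = j <;> by_cases h3 : a = k <;>
    by_cases h4 : b = k <;> by_cases h5 : j = k <;> (try simp_all) <;>
    first
      | ring1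
      | (intro hh; subst hh; simp_all)

lemma star_hgate (a b : Fin n) (hab : a ≠ b) :
    star (hgate a b) = levelOp ![a, b] (((1 - Complex.I)/2) • !![1, 1; 1, -1]) := by
  ext j k
  rw [Matrix.star_apply, hgate, levelOp2_apply a b hab, levelOp2_apply a b hab]
  have e00 : (((1 - Complex.I)/2) • !![(1:ℂ), 1; 1, -1]) 0 0 = (1 - Complex.I)/2 := by norm_num
  have e01 : (((1 - Complex.I)/2) • !![(1:ℂ), 1; 1, -1]) 0 1 = (1 - Complex.I)/2 := by norm_num
  have e10 : (((1 - Complex.I)/2) • !![(1:ℂ), 1; 1, -1]) 1 0 = (1 - Complex.I)/2 := by norm_num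
  have e11 : (((1 - Complex.I)/2) • !![(1:ℂ), 1; 1, -1]) 1 1 = -((1 - Complex.I)/2) := by norm_num
  by_cases h1 : a = j <;> by_cases h2 : b = j <;> by_cases h3 : a = k <;>
    by_cases h4 : b = k <;> by_cases h5 : j = k <;>
    (try simp_all [OH00, OH01, OH10, OH11, Complex.star_def, Complex.conj_I, map_div₀]) <;>
    first
      | ring1
      | (intro hh; subst hh; simp_all)

lemma hgate_unitary (a b : Fin n) (hab : a ≠ b) : hgate a b * star (hgate a b) = 1 := by
  rw [star_hgate a b hab, hgate, gate2_mul a b hab]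
  ext j k
  have e00 : (((1 - Complex.I)/2) • !![(1:ℂ), 1; 1, -1]) 0 0 = (1 - Complex.I)/2 := by norm_num
  have e01 : (((1 - Complex.I)/2) • !![(1:ℂ), 1; 1, -1]) 0 1 = (1 - Complex.I)/2 := by norm_num
  have e10 : (((1 - Complex.I)/2) • !![(1:ℂ), 1; 1, -1]) 1 0 = (1 - Complex.I)/2 := by norm_num
  have e11 : (((1 - Complex.I)/2) • !![(1:ℂ), 1; 1, -1]) 1 1 = -((1 - Complex.I)/2) := by norm_num
  simp only [levelOp2_apply a b hab, Matrix.one_apply, OH00, OH01, OH10, OH11, e00, e01, e10, e11]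
  by_cases h1 : a = j <;> by_cases h2 : b = j <;> by_cases h3 : a = k <;>
    by_cases h4 : b = k <;> by_cases h5 : j = k <;> (try simp_all) <;>
    first
      | ring1
      | linear_combination (-1/2 : ℂ) * Complex.I_sq
      | linear_combination (1/2 : ℂ) * Complex.I_sq
      | (intro hh; subst hh; simp_all)

lemma isGaussGen_igate (a : Fin n) : IsGaussGen (igate a) := Or.inl ⟨a, rfl⟩
lemma isGaussGen_xgate (a b : Fin n) (hab : a ≠ b) : IsGaussGen (xgate a b) :=
  Or.inr (Or.inl ⟨a, b, hab, rfl⟩)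
lemma isGaussGen_hgate (a b : Fin n) (hab : a ≠ b) : IsGaussGen (hgate a b) :=
  Or.inr (Or.inr ⟨a, b, hab, rfl⟩)

lemma gen_unitary {G : Matrix (Fin n) (Fin n) ℂ} (hG : IsGaussGen G) :
    G ∈ Matrix.unitaryGroup (Fin n) ℂ := by
  rw [Matrix.mem_unitaryGroup_iff]
  rcases hG with ⟨a, rfl⟩ | ⟨a, b, hab, rfl⟩ | ⟨a, b, hab, rfl⟩
  · exact igate_unitary a
  · exact xgate_unitary a b hab
  · exact hgate_unitary a b hab

lemma list_unitary {L : List (Matrix (Fin n) (Fin n) ℂ)} (hL : ∀ G ∈ L, IsGaussGen G) :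
    L.prod ∈ Matrix.unitaryGroup (Fin n) ℂ := by
  induction L with
  | nil => simp
  | cons G L ih =>
      rw [List.prod_cons]
      exact mul_mem (gen_unitary (hL G (by simp)))
        (ih fun G' hG' => hL G' (by simp [hG']))

def HasRep (M : Matrix (Fin n) (Fin n) ℂ) (Q : ℕ) : Prop :=
  ∃ A B : Matrix (Fin n) (Fin n) ℤ,
    ∀ j k, M j k = ((A j k : ℂ) + (B j k : ℂ) * Complex.I) / s2 ^ Q

lemma s2_pow_ne (Q : ℕ) : s2 ^ Q ≠ 0 := pow_ne_zero _ s2_ne_zero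

lemma s2_pow_add2 (Q : ℕ) : s2 ^ (Q + 2) = s2 ^ Q * 2 := by rw [pow_add, s2_sq]

lemma hasRep_bump {M : Matrix (Fin n) (Fin n) ℂ} {Q : ℕ} (h : HasRep M Q) :
    HasRep M (Q + 2) := by
  obtain ⟨A, B, hAB⟩ := h
  refine ⟨fun j k => 2 * A j k, fun j k => 2 * B j k, fun j k => ?_⟩
  rw [hAB j k, s2_pow_add2]
  have := s2_pow_ne Q
  push_cast
  field_simp

lemma hasRep_igate (a : Fin n) {M : Matrix (Fin n) (Fin n) ℂ} {Q : ℕ} (h : HasRep M Q) :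
    HasRep (igate a * M) Q := by
  obtain ⟨A, B, hAB⟩ := h
  refine ⟨fun j k => if a = j then -(B a k) else A j k,
          fun j k => if a = j then A a k else B j k, fun j k => ?_⟩
  rw [igate, igate_mul]
  by_cases h1 : a = j
  · simp only [if_pos h1, hAB a k]
    push_cast
    have hne := s2_pow_ne Q
    field_simp
    linear_combination (B a k : ℂ) * Complex.I_sq
  · simp only [if_neg h1, hAB j k]

lemma hasRep_xgate (a b : Fin n) (hab : a ≠ b) {M : Matrix (Fin n) (Fin n) ℂ} {Q : ℕ}
    (h : HasRep M Q) : HasRep (xgate a b * M) Q := by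
  obtain ⟨A, B, hAB⟩ := h
  refine ⟨fun j k => if a = j then A b k else if b = j then A a k else A j k,
          fun j k => if a = j then B b k else if b = j then B a k else B j k,
          fun j k => ?_⟩
  rw [xgate, gate2_mul a b hab]
  by_cases h1 : a = j
  · simp only [if_pos h1, X00, X01, hAB b k]
    ring
  · by_cases h2 : b = j
    · simp only [if_neg h1, if_pos h2, X10, X11, hAB a k]
      ring
    · simp only [if_neg h1, if_neg h2, hAB j k]

lemma s2_pow_add4 (Q : ℕ) : s2 ^ (Q + 4) = s2 ^ Q * 4 := by
  have : s2 ^ (Q + 4) = s2 ^ (Q + 2) * s2 ^ 2 := by ring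
  rw [this, s2_pow_add2, s2_sq]
  ring

lemma hasRep_hgate (a b : Fin n) (hab : a ≠ b) {M : Matrix (Fin n) (Fin n) ℂ} {Q : ℕ}
    (h : HasRep M Q) : HasRep (hgate a b * M) (Q + 4) := by
  obtain ⟨A, B, hAB⟩ := h
  refine ⟨fun j k =>
      if a = j then 2 * ((A a k + A b k) - (B a k + B b k))
      else if b = j then 2 * ((A a k - A b k) - (B a k - B b k))
      else 4 * A j k,
    fun j k =>
      if a = j then 2 * ((A a k + A b k) + (B a k + B b k))
      else if b = j then 2 * ((A a k - A b k) + (B a k - B b k))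
      else 4 * B j k,
    fun j k => ?_⟩
  have hQ4 := s2_pow_add4 Q
  have hne := s2_pow_ne Q
  rw [hgate, gate2_mul a b hab]
  by_cases h1 : a = j
  · simp only [if_pos h1, OH00, OH01, hAB a k, hAB b k, hQ4]
    push_cast
    field_simp
    linear_combination (4 * (B a k : ℂ) + 4 * (B b k : ℂ)) * Complex.I_sq
  · by_cases h2 : b = j
    · simp only [if_neg h1, if_pos h2, OH10, OH11, hAB a k, hAB b k, hQ4]
      push_cast
      field_simp
      linear_combination (4 * (B a k : ℂ) - 4 * (B b k : ℂ)) * Complex.I_sq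
    · simp only [if_neg h1, if_neg h2, hAB j k, hQ4]
      push_cast
      field_simp

lemma hasRep_gen {G M : Matrix (Fin n) (Fin n) ℂ} {Q : ℕ} (hG : IsGaussGen G)
    (h : HasRep M Q) : HasRep (G * M) (Q + 4) := by
  rcases hG with ⟨a, rfl⟩ | ⟨a, b, hab, rfl⟩ | ⟨a, b, hab, rfl⟩
  · exact hasRep_bump (hasRep_bump (hasRep_igate a h))
  · exact hasRep_bump (hasRep_bump (hasRep_xgate a b hab h))
  · exact hasRep_hgate a b hab h

lemma hasRep_list {L : List (Matrix (Fin n) (Fin n) ℂ)} (hL : ∀ G ∈ L, IsGaussGen G)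
    {M : Matrix (Fin n) (Fin n) ℂ} {Q : ℕ} (h : HasRep M Q) :
    ∃ Q', Q' % 2 = Q % 2 ∧ HasRep (L.prod * M) Q' := by
  induction L with
  | nil => exact ⟨Q, rfl, by simpa⟩
  | cons G L ih =>
      obtain ⟨Q', hQ', hrep⟩ := ih fun G' hG' => hL G' (by simp [hG'])
      refine ⟨Q' + 4, by omega, ?_⟩
      rw [List.prod_cons, mul_assoc]
      exact hasRep_gen (hL G (by simp)) hrep

end GaussDev
namespace GaussDev
variable {n : ℕ}

def GoodGen (c : Fin n) (G : Matrix (Fin n) (Fin n) ℂ) : Prop :=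
  (∃ a : Fin n, c ≤ a ∧ G = igate a) ∨
  (∃ a b : Fin n, a ≠ b ∧ c ≤ a ∧ c ≤ b ∧ (G = xgate a b ∨ G = hgate a b))

lemma goodGen_isGaussGen {c : Fin n} {G : Matrix (Fin n) (Fin n) ℂ}
    (h : GoodGen c G) : IsGaussGen G := by
  rcases h with ⟨a, _, rfl⟩ | ⟨a, b, hab, _, _, rfl | rfl⟩
  · exact isGaussGen_igate a
  · exact isGaussGen_xgate a b hab
  · exact isGaussGen_hgate a b hab

lemma gate2_fix {a b k : Fin n} (hab : a ≠ b) (hak : a ≠ k) (hbk : b ≠ k)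
    (W : Matrix (Fin 2) (Fin 2) ℂ) (z : ℂ) :
    levelOp ![a, b] W *ᵥ (fun j => if j = k then z else 0)
      = fun j => if j = k then z else 0 := by
  rw [gate2_mulVec a b hab]
  funext x
  simp only [if_neg hak, if_neg hbk, mul_zero, add_zero, zero_add]
  by_cases h1 : a = x
  · rw [if_pos h1, if_neg (h1 ▸ hak)]
  · by_cases h2 : b = x
    · rw [if_neg h1, if_pos h2, if_neg (h2 ▸ hbk)]
    · rw [if_neg h1, if_neg h2]

lemma goodGen_fix {c : Fin n} {G : Matrix (Fin n) (Fin n) ℂ} (h : GoodGen c G)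
    {k : Fin n} (hk : k < c) (z : ℂ) :
    G *ᵥ (fun j => if j = k then z else 0) = fun j => if j = k then z else 0 := by
  rcases h with ⟨a, ha, rfl⟩ | ⟨a, b, hab, ha, hb, rfl | rfl⟩
  · have hak : a ≠ k := (lt_of_lt_of_le hk ha).ne'
    rw [igate, igate_mulVec, if_neg hak, mul_zero]
    exact Function.update_eq_self_iff.mpr (by simp [hak])
  · exact gate2_fix hab (lt_of_lt_of_le hk ha).ne' (lt_of_lt_of_le hk hb).ne' _ z
  · exact gate2_fix hab (lt_of_lt_of_le hk ha).ne' (lt_of_lt_of_le hk hb).ne' _ z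

lemma list_fix {c : Fin n} {L : List (Matrix (Fin n) (Fin n) ℂ)}
    (hL : ∀ G ∈ L, GoodGen c G) {k : Fin n} (hk : k < c) (z : ℂ) :
    L.prod *ᵥ (fun j => if j = k then z else 0) = fun j => if j = k then z else 0 := by
  induction L with
  | nil => rw [List.prod_nil, Matrix.one_mulVec]
  | cons G L ih =>
      rw [List.prod_cons, ← Matrix.mulVec_mulVec,
        ih (fun G' hG' => hL G' (by simp [hG'])), goodGen_fix (hL G (by simp)) hk]

lemma i_combo (x y s : ℂ) : Complex.I * ((x + y * Complex.I) / s) = (-y + x * Complex.I) / s := by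
  rw [mul_div_assoc']
  congr 1
  linear_combination y * Complex.I_sq

lemma oh_combo (x1 y1 x2 y2 u v s : ℂ) (hu : x1 + x2 = 2 * u) (hv : y1 + y2 = 2 * v) :
    (1 + Complex.I)/2 * ((x1 + y1 * Complex.I) / s) + (1 + Complex.I)/2 * ((x2 + y2 * Complex.I) / s)
      = ((u - v) + (u + v) * Complex.I) / s := by
  rw [mul_div_assoc', mul_div_assoc', ← add_div]
  congr 1
  have h : (1 + Complex.I)/2 * (x1 + y1 * Complex.I) + (1 + Complex.I)/2 * (x2 + y2 * Complex.I)
      = (1 + Complex.I)/2 * ((x1 + x2) + (y1 + y2) * Complex.I) := by ring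
  rw [h, hu, hv]
  linear_combination (v : ℂ) * Complex.I_sq

lemma oh_combo' (x1 y1 x2 y2 u v s : ℂ) (hu : x1 - x2 = 2 * u) (hv : y1 - y2 = 2 * v) :
    (1 + Complex.I)/2 * ((x1 + y1 * Complex.I) / s) + (-((1 + Complex.I)/2)) * ((x2 + y2 * Complex.I) / s)
      = ((u - v) + (u + v) * Complex.I) / s := by
  rw [mul_div_assoc', mul_div_assoc', ← add_div]
  congr 1
  have h : (1 + Complex.I)/2 * (x1 + y1 * Complex.I) + (-((1 + Complex.I)/2)) * (x2 + y2 * Complex.I)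
      = (1 + Complex.I)/2 * ((x1 - x2) + (y1 - y2) * Complex.I) := by ring
  rw [h, hu, hv]
  linear_combination (v : ℂ) * Complex.I_sq

lemma wo_factor (x y p r : ℂ) (q : ℕ) (hp : x + y = 2 * p) (hr : y - x = 2 * r) :
    (x + y * Complex.I) / s2 ^ (q + 1) = wo * ((p + r * Complex.I) / s2 ^ q) := by
  have hx : x = p - r := by linear_combination hp / 2 - hr / 2
  have hy : y = p + r := by linear_combination hp / 2 + hr / 2
  rw [hx, hy, wo, pow_succ', div_mul_div_comm]
  congr 1
  linear_combination (-r : ℂ) * Complex.I_sq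

lemma wo_pow4 : wo ^ 4 = -1 := by
  have : wo ^ 4 = (wo ^ 2) ^ 2 := by ring
  rw [this, wo_sq, Complex.I_sq]

lemma sum_split (F : Fin n → ℤ) {j k : Fin n} (hjk : j ≠ k) :
    ∑ x, F x = F j + F k + ∑ x ∈ (Finset.univ.erase j).erase k, F x := by
  rw [← Finset.add_sum_erase _ F (Finset.mem_univ j),
    ← Finset.add_sum_erase _ F (Finset.mem_erase.mpr ⟨Ne.symm hjk, Finset.mem_univ k⟩)]
  ring

def oddIdx (A B : Fin n → ℤ) : Finset (Fin n) :=
  Finset.univ.filter (fun j => (A j + B j) % 2 = 1)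

lemma mem_oddIdx {A B : Fin n → ℤ} {x : Fin n} :
    x ∈ oddIdx A B ↔ (A x + B x) % 2 = 1 := by
  simp [oddIdx]

end GaussDev
namespace GaussDev
variable {n : ℕ}

lemma even_sq_add_sq_iff (x y : ℤ) : Even (x^2 + y^2) ↔ Even (x + y) := by
  simp only [Int.even_add, Int.even_pow]
  tauto

set_option maxHeartbeats 2000000 in
lemma colReduce (c : Fin n) (m : ℕ) :
    ∀ (q : ℕ) (A B : Fin n → ℤ),
      (n + 2) * q + (oddIdx A B).card ≤ m →
      (∑ j, (A j ^ 2 + B j ^ 2)) = 2 ^ q →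
      (∀ j : Fin n, j < c → A j = 0 ∧ B j = 0) →
      ∃ (L : List (Matrix (Fin n) (Fin n) ℂ)) (t : ℕ),
        (∀ G ∈ L, GoodGen c G) ∧
        L.prod *ᵥ (fun j => ((A j : ℂ) + (B j : ℂ) * Complex.I) / s2 ^ q)
          = fun j => if j = c then wo ^ t else 0 := by
  induction m using Nat.strong_induction_on with
  | _ m IH =>
  intro q A B hm hnorm hsupp
  match q, hnorm, hm with
  | 0, hnorm, hm =>
    -- base case: a single unit entry
    have hnn : ∀ j : Fin n, 0 ≤ A j ^ 2 + B j ^ 2 := fun j => by positivity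
    have hex : ∃ j, A j ^ 2 + B j ^ 2 ≠ 0 := by
      by_contra h
      push_neg at h
      rw [Finset.sum_eq_zero (fun j _ => h j)] at hnorm
      norm_num at hnorm
    obtain ⟨j0, hj0⟩ := hex
    have hle : A j0 ^ 2 + B j0 ^ 2 ≤ 1 := by
      calc A j0 ^ 2 + B j0 ^ 2 ≤ ∑ j, (A j ^ 2 + B j ^ 2) :=
            Finset.single_le_sum (fun j _ => hnn j) (Finset.mem_univ j0)
        _ = 1 := by rw [hnorm]; norm_num
    have hone : A j0 ^ 2 + B j0 ^ 2 = 1 := by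
      have := hnn j0; omega
    have hzero : ∀ j, j ≠ j0 → A j = 0 ∧ B j = 0 := by
      intro j hj
      have hsplit := Finset.add_sum_erase Finset.univ (fun x => A x ^ 2 + B x ^ 2)
        (Finset.mem_univ j0)
      have hsum1 : A j0 ^ 2 + B j0 ^ 2 + ∑ x ∈ Finset.univ.erase j0, (A x ^ 2 + B x ^ 2) = 1 := by
        rw [hsplit, hnorm]; norm_num
      have hpos : 0 ≤ ∑ x ∈ Finset.univ.erase j0, (A x ^ 2 + B x ^ 2) :=
        Finset.sum_nonneg (fun x _ => hnn x)
      have hsum0 : ∑ x ∈ Finset.univ.erase j0, (A x ^ 2 + B x ^ 2) = 0 := by omega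
      have hall := (Finset.sum_eq_zero_iff_of_nonneg (fun x _ => hnn x)).mp hsum0
      have hj' := hall j (Finset.mem_erase.mpr ⟨hj, Finset.mem_univ j⟩)
      have hA2 : A j ^ 2 = 0 := by nlinarith [sq_nonneg (A j), sq_nonneg (B j)]
      have hB2 : B j ^ 2 = 0 := by nlinarith [sq_nonneg (A j), sq_nonneg (B j)]
      exact ⟨(pow_eq_zero_iff (by norm_num : (2:ℕ) ≠ 0)).mp hA2,
             (pow_eq_zero_iff (by norm_num : (2:ℕ) ≠ 0)).mp hB2⟩
    have hcases : (A j0 = 1 ∧ B j0 = 0) ∨ (A j0 = -1 ∧ B j0 = 0) ∨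
        (A j0 = 0 ∧ B j0 = 1) ∨ (A j0 = 0 ∧ B j0 = -1) := by
      have h1 : A j0 ≤ 1 := by nlinarith
      have h2 : -1 ≤ A j0 := by nlinarith
      have h3 : B j0 ≤ 1 := by nlinarith
      have h4 : -1 ≤ B j0 := by nlinarith
      interval_cases (A j0) <;> interval_cases (B j0) <;> norm_num at hone <;> norm_num
    have hsupp0 : c ≤ j0 := by
      by_contra h
      push_neg at h
      obtain ⟨hA0, hB0⟩ := hsupp j0 h
      rw [hA0, hB0] at hone
      norm_num at hone
    obtain ⟨s, hvs⟩ : ∃ s : ℕ, ((A j0 : ℂ) + (B j0 : ℂ) * Complex.I) = wo ^ s := by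
      rcases hcases with ⟨hA, hB⟩ | ⟨hA, hB⟩ | ⟨hA, hB⟩ | ⟨hA, hB⟩
      · exact ⟨0, by rw [hA, hB]; norm_num⟩
      · exact ⟨4, by rw [hA, hB, wo_pow4]; norm_num⟩
      · exact ⟨2, by rw [hA, hB, wo_sq]; norm_num⟩
      · refine ⟨6, by
          rw [hA, hB]
          have h6 : wo ^ 6 = -Complex.I := by
            rw [show (6:ℕ) = 2 * 3 by norm_num, pow_mul, wo_sq,
              show (3:ℕ) = 2 + 1 from rfl, pow_succ, Complex.I_sq]
            ring
          rw [h6]; norm_num⟩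
    have hv : (fun j => ((A j : ℂ) + (B j : ℂ) * Complex.I) / s2 ^ 0)
        = fun j => if j = j0 then wo ^ s else 0 := by
      funext x
      by_cases hx : x = j0
      · subst hx; simp [hvs]
      · obtain ⟨hA0, hB0⟩ := hzero x hx
        simp [hA0, hB0, hx]
    by_cases hj0c : j0 = c
    · exact ⟨[], s, by simp, by rw [List.prod_nil, Matrix.one_mulVec, hv, hj0c]⟩
    · have hcj0 : c ≠ j0 := fun h => hj0c h.symm
      refine ⟨[xgate c j0], s, ?_, ?_⟩
      · intro G hG
        rw [List.mem_singleton] at hG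
        subst hG
        exact Or.inr ⟨c, j0, hcj0, le_refl c, hsupp0, Or.inl rfl⟩
      · rw [List.prod_singleton, hv, xgate, gate2_mulVec c j0 hcj0]
        funext x
        simp only [X00, X01, X10, X11, zero_mul, one_mul, zero_add, add_zero]
        by_cases h1 : c = x
        · subst h1
          simp [hcj0]
        · by_cases h2 : j0 = x
          · subst h2
            simp [hcj0, hj0c, h1]
          · have hx1 : ¬ x = c := fun hh => h1 hh.symm
            have hx2 : ¬ x = j0 := fun hh => h2 hh.symm
            simp [h1, h2, hx1, hx2]
  | (q' + 1), hnorm, hm =>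
    by_cases hO : oddIdx A B = ∅
    · -- all entries even: extract a factor of ω
      have heven : ∀ x, (A x + B x) % 2 = 0 := by
        intro x
        by_contra h
        have hx : x ∈ oddIdx A B := mem_oddIdx.mpr (by omega)
        rw [hO] at hx
        exact absurd hx (Finset.notMem_empty x)
      obtain ⟨P, hP⟩ : ∃ P : Fin n → ℤ, ∀ x, A x + B x = 2 * P x :=
        ⟨fun x => (A x + B x) / 2, fun x => by
          have := heven x
          show A x + B x = 2 * ((A x + B x) / 2)
          omega⟩
      obtain ⟨R, hR⟩ : ∃ R : Fin n → ℤ, ∀ x, B x - A x = 2 * R x :=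
        ⟨fun x => (B x - A x) / 2, fun x => by
          have := heven x
          show B x - A x = 2 * ((B x - A x) / 2)
          omega⟩
      have hnorm' : ∑ j, (P j ^ 2 + R j ^ 2) = 2 ^ q' := by
        have key : ∀ x, 2 * (P x ^ 2 + R x ^ 2) = A x ^ 2 + B x ^ 2 := fun x => by
          have hA : A x = P x - R x := by have h1 := hP x; have h2 := hR x; omega
          have hB : B x = P x + R x := by have h1 := hP x; have h2 := hR x; omega
          rw [hA, hB]; ring
        have h2 : 2 * ∑ j, (P j ^ 2 + R j ^ 2) = 2 * 2 ^ q' := by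
          rw [Finset.mul_sum, Finset.sum_congr rfl fun x _ => key x, hnorm]
          ring
        omega
      have hsupp' : ∀ j : Fin n, j < c → P j = 0 ∧ R j = 0 := fun j hj => by
        obtain ⟨h1, h2⟩ := hsupp j hj
        have hp := hP j; have hr := hR j
        omega
      have hcard : (oddIdx P R).card ≤ n := by
        calc (oddIdx P R).card ≤ Finset.univ.card := Finset.card_filter_le _ _
          _ = n := by simp
      obtain ⟨L, t, hLg, hLv⟩ := IH ((n+2) * q' + (oddIdx P R).card)
        (by
          rw [hO] at hm
          simp only [Finset.card_empty, add_zero] at hm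
          have hmul : (n + 2) * (q' + 1) = (n + 2) * q' + (n + 2) := by ring
          omega) q' P R le_rfl hnorm' hsupp'
      refine ⟨L, t + 1, hLg, ?_⟩
      have hvfac : (fun j => ((A j : ℂ) + (B j : ℂ) * Complex.I) / s2 ^ (q' + 1))
          = wo • (fun j => ((P j : ℂ) + (R j : ℂ) * Complex.I) / s2 ^ q') := by
        funext x
        rw [Pi.smul_apply, smul_eq_mul]
        exact wo_factor _ _ _ _ q' (by exact_mod_cast hP x) (by exact_mod_cast hR x)
      rw [hvfac, Matrix.mulVec_smul, hLv]
      funext x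
      rw [Pi.smul_apply, smul_eq_mul]
      by_cases hx : x = c
      · rw [if_pos hx, if_pos hx, pow_succ]
        ring
      · rw [if_neg hx, if_neg hx, mul_zero]
    · -- two odd entries exist
      obtain ⟨j, hj⟩ := Finset.nonempty_of_ne_empty hO
      have hjodd : (A j + B j) % 2 = 1 := mem_oddIdx.mp hj
      have hex2 : ∃ k, k ≠ j ∧ (A k + B k) % 2 = 1 := by
        by_contra h
        push_neg at h
        have heven : ∀ x ∈ Finset.univ.erase j, Even (A x ^ 2 + B x ^ 2) := by
          intro x hx
          obtain ⟨hxj, _⟩ := Finset.mem_erase.mp hx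
          have hx0 := h x hxj
          rw [even_sq_add_sq_iff, Int.even_iff]
          omega
        have hS : Even (∑ x ∈ Finset.univ.erase j, (A x ^ 2 + B x ^ 2)) :=
          Finset.even_sum _ heven
        have htot : Even (∑ x, (A x ^ 2 + B x ^ 2)) := hnorm ▸ ⟨2 ^ q', by ring⟩
        have hsplit := Finset.add_sum_erase Finset.univ (fun x => A x ^ 2 + B x ^ 2)
          (Finset.mem_univ j)
        rw [← hsplit] at htot
        have hFj : Even (A j ^ 2 + B j ^ 2) := (Int.even_add.mp htot).mpr hS
        rw [even_sq_add_sq_iff, Int.even_iff] at hFj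
        omega
      obtain ⟨k, hkj, hkodd⟩ := hex2
      have hcj : c ≤ j := by
        by_contra h
        push_neg at h
        obtain ⟨h1, h2⟩ := hsupp j h
        rw [h1, h2] at hjodd
        norm_num at hjodd
      have hck : c ≤ k := by
        by_contra h
        push_neg at h
        obtain ⟨h1, h2⟩ := hsupp k h
        rw [h1, h2] at hkodd
        norm_num at hkodd
      have hjk : j ≠ k := fun hh => hkj hh.symm
      -- Step 1: align parities using an optional i gate
      have step1 : ∃ (L0 : List (Matrix (Fin n) (Fin n) ℂ)) (A1 B1 : Fin n → ℤ),
          (∀ G ∈ L0, GoodGen c G) ∧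
          (L0.prod *ᵥ (fun x => ((A x : ℂ) + (B x : ℂ) * Complex.I) / s2 ^ (q' + 1))
            = fun x => ((A1 x : ℂ) + (B1 x : ℂ) * Complex.I) / s2 ^ (q' + 1)) ∧
          (∑ x, (A1 x ^ 2 + B1 x ^ 2)) = 2 ^ (q' + 1) ∧
          (∀ x : Fin n, x < c → A1 x = 0 ∧ B1 x = 0) ∧
          (oddIdx A1 B1).card = (oddIdx A B).card ∧
          (A1 j + B1 j) % 2 = 1 ∧ (A1 k + B1 k) % 2 = 1 ∧ (A1 j + A1 k) % 2 = 0 := by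
        by_cases hmatch : (A j + A k) % 2 = 0
        · exact ⟨[], A, B, by simp, by rw [List.prod_nil, Matrix.one_mulVec], hnorm, hsupp, rfl,
            hjodd, hkodd, hmatch⟩
        · refine ⟨[igate k], (fun x => if k = x then -(B x) else A x),
            (fun x => if k = x then A x else B x), ?_, ?_, ?_, ?_, ?_, ?_, ?_, ?_⟩
          · intro G hG
            rw [List.mem_singleton] at hG
            subst hG
            exact Or.inl ⟨k, hck, rfl⟩
          · rw [List.prod_singleton, igate, igate_mulVec]
            funext x
            rw [Function.update_apply]
            simp only []
            by_cases hx : x = k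
            · subst hx
              rw [if_pos rfl, if_pos rfl, if_pos rfl]
              push_cast
              exact i_combo _ _ _
            · rw [if_neg hx, if_neg (fun hh => hx hh.symm), if_neg (fun hh => hx hh.symm)]
          · have key : ∀ x : Fin n, ((if k = x then -(B x) else A x) ^ 2
                + (if k = x then A x else B x) ^ 2) = A x ^ 2 + B x ^ 2 := fun x => by
              by_cases hx : k = x
              · rw [if_pos hx, if_pos hx]; ring
              · rw [if_neg hx, if_neg hx]
            rw [Finset.sum_congr rfl fun x _ => key x]
            exact hnorm
          · intro x hxc
            have hne : ¬ k = x := (lt_of_lt_of_le hxc hck).ne'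
            simp only []
            rw [if_neg hne, if_neg hne]
            exact hsupp x hxc
          · congr 1
            ext x
            simp only [mem_oddIdx]
            by_cases hx : k = x
            · rw [if_pos hx, if_pos hx]
              constructor <;> (intro; omega)
            · rw [if_neg hx, if_neg hx]
          · show ((if k = j then -(B j) else A j) + (if k = j then A j else B j)) % 2 = 1
            rw [if_neg hkj, if_neg hkj]
            exact hjodd
          · show ((if k = k then -(B k) else A k) + (if k = k then A k else B k)) % 2 = 1
            rw [if_pos rfl, if_pos rfl]
            omega
          · show ((if k = j then -(B j) else A j) + (if k = k then -(B k) else A k)) % 2 = 0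
            rw [if_neg hkj, if_pos rfl]
            omega
      obtain ⟨L0, A1, B1, hL0g, hL0v, hnorm1, hsupp1, hcard1, hj1, hk1, hmatch1⟩ := step1
      obtain ⟨a2, ha2⟩ : ∃ a2, A1 j + A1 k = 2 * a2 := ⟨(A1 j + A1 k) / 2, by omega⟩
      obtain ⟨b2, hb2⟩ : ∃ b2, B1 j + B1 k = 2 * b2 := ⟨(B1 j + B1 k) / 2, by omega⟩
      obtain ⟨da, hda⟩ : ∃ da, A1 j - A1 k = 2 * da := ⟨(A1 j - A1 k) / 2, by omega⟩
      obtain ⟨db, hdb⟩ : ∃ db, B1 j - B1 k = 2 * db := ⟨(B1 j - B1 k) / 2, by omega⟩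
      obtain ⟨A2, hA2j, hA2k, hA2e⟩ : ∃ A2 : Fin n → ℤ, A2 j = a2 - b2 ∧ A2 k = da - db ∧
          ∀ x, x ≠ j → x ≠ k → A2 x = A1 x :=
        ⟨fun x => if j = x then a2 - b2 else if k = x then da - db else A1 x,
          by simp, by simp [hjk], fun x hx1 hx2 => by simp [Ne.symm hx1, Ne.symm hx2]⟩
      obtain ⟨B2, hB2j, hB2k, hB2e⟩ : ∃ B2 : Fin n → ℤ, B2 j = a2 + b2 ∧ B2 k = da + db ∧
          ∀ x, x ≠ j → x ≠ k → B2 x = B1 x :=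
        ⟨fun x => if j = x then a2 + b2 else if k = x then da + db else B1 x,
          by simp, by simp [hjk], fun x hx1 hx2 => by simp [Ne.symm hx1, Ne.symm hx2]⟩
      have hrest : ∑ x ∈ (Finset.univ.erase j).erase k, (A2 x ^ 2 + B2 x ^ 2)
          = ∑ x ∈ (Finset.univ.erase j).erase k, (A1 x ^ 2 + B1 x ^ 2) := by
        refine Finset.sum_congr rfl fun x hx => ?_
        obtain ⟨hxk, hx'⟩ := Finset.mem_erase.mp hx
        obtain ⟨hxj, _⟩ := Finset.mem_erase.mp hx'
        rw [hA2e x hxj hxk, hB2e x hxj hxk]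
      have hnorm2 : ∑ x, (A2 x ^ 2 + B2 x ^ 2) = 2 ^ (q' + 1) := by
        have h1 := sum_split (fun x => A2 x ^ 2 + B2 x ^ 2) hjk
        have h2 := sum_split (fun x => A1 x ^ 2 + B1 x ^ 2) hjk
        have hpair : A2 j ^ 2 + B2 j ^ 2 + (A2 k ^ 2 + B2 k ^ 2)
            = A1 j ^ 2 + B1 j ^ 2 + (A1 k ^ 2 + B1 k ^ 2) := by
          have e1 : A1 j = a2 + da := by omega
          have e2 : A1 k = a2 - da := by omega
          have e3 : B1 j = b2 + db := by omega
          have e4 : B1 k = b2 - db := by omega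
          rw [hA2j, hA2k, hB2j, hB2k, e1, e2, e3, e4]
          ring
        rw [h1, hrest]
        rw [h2] at hnorm1
        linarith
      have hsupp2 : ∀ x : Fin n, x < c → A2 x = 0 ∧ B2 x = 0 := by
        intro x hxc
        have hxj : x ≠ j := (lt_of_lt_of_le hxc hcj).ne
        have hxk : x ≠ k := (lt_of_lt_of_le hxc hck).ne
        rw [hA2e x hxj hxk, hB2e x hxj hxk]
        exact hsupp1 x hxc
      have hj2even : (A2 j + B2 j) % 2 = 0 := by rw [hA2j, hB2j]; omega
      have hk2even : (A2 k + B2 k) % 2 = 0 := by rw [hA2k, hB2k]; omega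
      have hsub : oddIdx A2 B2 ⊆ oddIdx A1 B1 := by
        intro x hx
        rw [mem_oddIdx] at hx ⊢
        by_cases hxj : x = j
        · subst hxj; omega
        · by_cases hxk : x = k
          · subst hxk; omega
          · rw [hA2e x hxj hxk, hB2e x hxj hxk] at hx
            exact hx
      have hjin : j ∈ oddIdx A1 B1 := mem_oddIdx.mpr hj1
      have hjout : j ∉ oddIdx A2 B2 := by rw [mem_oddIdx]; omega
      have hlt : (oddIdx A2 B2).card < (oddIdx A1 B1).card :=
        Finset.card_lt_card ⟨hsub, fun hsup => hjout (hsup hjin)⟩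
      obtain ⟨L2, t, hL2g, hL2v⟩ := IH ((n + 2) * (q' + 1) + (oddIdx A2 B2).card)
        (by omega) (q' + 1) A2 B2 le_rfl hnorm2 hsupp2
      have hveq : hgate j k *ᵥ (fun x => ((A1 x : ℂ) + (B1 x : ℂ) * Complex.I) / s2 ^ (q' + 1))
          = fun x => ((A2 x : ℂ) + (B2 x : ℂ) * Complex.I) / s2 ^ (q' + 1) := by
        rw [hgate, gate2_mulVec j k hjk]
        funext x
        by_cases hx1 : j = x
        · subst hx1
          rw [if_pos rfl, OH00, OH01, hA2j, hB2j]
          push_cast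
          exact oh_combo _ _ _ _ _ _ _ (by exact_mod_cast ha2) (by exact_mod_cast hb2)
        · by_cases hx2 : k = x
          · subst hx2
            rw [if_neg hx1, if_pos rfl, OH10, OH11, hA2k, hB2k]
            push_cast
            exact oh_combo' _ _ _ _ _ _ _ (by exact_mod_cast hda) (by exact_mod_cast hdb)
          · rw [if_neg hx1, if_neg hx2, hA2e x (fun hh => hx1 hh.symm) (fun hh => hx2 hh.symm),
              hB2e x (fun hh => hx1 hh.symm) (fun hh => hx2 hh.symm)]
      refine ⟨L2 ++ (hgate j k :: L0), t, ?_, ?_⟩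
      · intro G hG
        rw [List.mem_append, List.mem_cons] at hG
        rcases hG with h | h | h
        · exact hL2g G h
        · subst h
          exact Or.inr ⟨j, k, hjk, hcj, hck, Or.inr rfl⟩
        · exact hL0g G h
      · rw [List.prod_append, List.prod_cons, ← Matrix.mulVec_mulVec, ← Matrix.mulVec_mulVec,
          hL0v, hveq, hL2v]

end GaussDev
namespace GaussDev
variable {n : ℕ}

lemma conj_mul_self (x y : ℤ) (Q : ℕ) :
    star (((x : ℂ) + (y : ℂ) * Complex.I) / s2 ^ Q) * (((x : ℂ) + (y : ℂ) * Complex.I) / s2 ^ Q)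
      = ((x ^ 2 + y ^ 2 : ℤ) : ℂ) / (2 : ℂ) ^ Q := by
  have hsd : s2 ^ Q * s2 ^ Q = (2 : ℂ) ^ Q := by rw [← mul_pow, s2_mul_self]
  simp only [Complex.star_def, map_div₀, map_add, _root_.map_mul, map_pow, Complex.conj_ofReal,
    Complex.conj_I, map_intCast]
  rw [div_mul_div_comm, hsd]
  congr 1
  push_cast
  linear_combination (-(y : ℂ) ^ 2) * Complex.I_sq

lemma intPair_eq_zero {x y : ℤ} (h : ((x : ℂ) + (y : ℂ) * Complex.I) = 0) : x = 0 ∧ y = 0 := by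
  have hre := congrArg Complex.re h
  have him := congrArg Complex.im h
  simp at hre him
  constructor
  · exact_mod_cast hre
  · exact_mod_cast him

lemma replicate_igate_mulVec (a : Fin n) (mr : ℕ) (v : Fin n → ℂ) :
    (List.replicate mr (igate a)).prod *ᵥ v = Function.update v a (Complex.I ^ mr * v a) := by
  induction mr with
  | zero =>
      rw [List.replicate_zero, List.prod_nil, Matrix.one_mulVec, pow_zero, one_mul,
        Function.update_eq_self]
  | succ mr ihm =>
      rw [List.replicate_succ, List.prod_cons, ← Matrix.mulVec_mulVec, ihm, igate, igate_mulVec,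
        Function.update_self, Function.update_idem]
      congr 1
      rw [pow_succ]
      ring

lemma matLoop (V : Matrix (Fin n) (Fin n) ℂ) (hV : V ∈ Matrix.unitaryGroup (Fin n) ℂ)
    (q : ℕ) (hrep : HasRep V q) (d : ℕ) :
    d ≤ n →
    ∃ (L : List (Matrix (Fin n) (Fin n) ℂ)) (Q : ℕ),
      (∀ G ∈ L, IsGaussGen G) ∧ HasRep (L.prod * V) Q ∧
      L.prod * V ∈ Matrix.unitaryGroup (Fin n) ℂ ∧
      ∀ k : Fin n, (k : ℕ) < d → ∃ t : ℕ, t ≤ 1 ∧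
        ∀ j, (L.prod * V) j k = if j = k then wo ^ t else 0 := by
  induction d with
  | zero =>
      intro _
      refine ⟨[], q, by simp, ?_, ?_, fun k hk => absurd hk (Nat.not_lt_zero _)⟩
      · rw [List.prod_nil, one_mul]; exact hrep
      · rw [List.prod_nil, one_mul]; exact hV
  | succ d ihd =>
      intro hd
      obtain ⟨L, Q, hLg, hLrep, hLu, hcols⟩ := ihd (by omega)
      have hdn : d < n := by omega
      set cd : Fin n := ⟨d, hdn⟩ with hcd
      set M := L.prod * V with hM
      obtain ⟨Ar, Br, hAB⟩ := hLrep
      have hsMM : star M * M = 1 := (Matrix.mem_unitaryGroup_iff'.mp hLu)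
      have hdiag : ∑ r, (star M) cd r * M r cd = 1 := by
        have h1 : (star M * M) cd cd = (1 : Matrix (Fin n) (Fin n) ℂ) cd cd := by rw [hsMM]
        rw [Matrix.mul_apply] at h1
        simpa [Matrix.one_apply] using h1
      have hterm : ∀ r, (star M) cd r * M r cd
          = (((Ar r cd) ^ 2 + (Br r cd) ^ 2 : ℤ) : ℂ) / (2 : ℂ) ^ Q := fun r => by
        rw [Matrix.star_apply, hAB r cd]
        exact conj_mul_self _ _ _
      rw [Finset.sum_congr rfl fun r _ => hterm r, ← Finset.sum_div,
        div_eq_one_iff_eq (pow_ne_zero _ (two_ne_zero))] at hdiag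
      have hnormInt : ∑ r, ((Ar r cd) ^ 2 + (Br r cd) ^ 2) = 2 ^ Q := by
        exact_mod_cast hdiag
      have hzeros : ∀ r : Fin n, r < cd → ((fun x => Ar x cd) r = 0 ∧ (fun x => Br x cd) r = 0) := by
        intro r hr
        have hrd : (r : ℕ) < d := hr
        obtain ⟨tk, htk1, htkcol⟩ := hcols r hrd
        have hne : r ≠ cd := ne_of_lt hr
        have h0 : (star M * M) r cd = 0 := by rw [hsMM]; simp [Matrix.one_apply, hne]
        rw [Matrix.mul_apply] at h0
        have hterm2 : ∀ x, (star M) r x * M x cd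
            = if x = r then star (wo ^ tk) * M r cd else 0 := by
          intro x
          rw [Matrix.star_apply, htkcol x]
          by_cases hx : x = r
          · subst hx; rw [if_pos rfl, if_pos rfl]
          · rw [if_neg hx, if_neg hx]; simp
        rw [Finset.sum_congr rfl fun x _ => hterm2 x, Finset.sum_ite_eq'] at h0
        simp only [Finset.mem_univ, if_true] at h0
        rcases mul_eq_zero.mp h0 with h | h
        · rw [star_eq_zero] at h
          exact absurd h (pow_ne_zero _ wo_ne_zero)
        · rw [hAB r cd, div_eq_zero_iff] at h
          rcases h with h | h
          · exact intPair_eq_zero h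
          · exact absurd h (s2_pow_ne Q)
      obtain ⟨Lc, t, hLcg, hLcv⟩ := colReduce cd
        ((n + 2) * Q + (oddIdx (fun x => Ar x cd) (fun x => Br x cd)).card)
        Q (fun x => Ar x cd) (fun x => Br x cd) le_rfl hnormInt hzeros
      set Fx : List (Matrix (Fin n) (Fin n) ℂ) := List.replicate (3 * (t / 2)) (igate cd) with hFx
      have hgen : ∀ G ∈ (Fx ++ Lc) ++ L, IsGaussGen G := by
        intro G hG
        rw [List.mem_append, List.mem_append] at hG
        rcases hG with (h | h) | h
        · rw [List.eq_of_mem_replicate h]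
          exact isGaussGen_igate cd
        · exact goodGen_isGaussGen (hLcg G h)
        · exact hLg G h
      have hprod : ((Fx ++ Lc) ++ L).prod * V = Fx.prod * Lc.prod * M := by
        simp only [List.prod_append, hM, mul_assoc]
      obtain ⟨Q', hQ'par, hrep'⟩ := hasRep_list
        (L := Fx ++ Lc) (fun G hG => hgen G (by rw [List.mem_append]; exact Or.inl hG))
        (M := M) (Q := Q) ⟨Ar, Br, hAB⟩
      refine ⟨(Fx ++ Lc) ++ L, Q', hgen, ?_, ?_, ?_⟩
      · rw [hprod]
        rw [List.prod_append, mul_assoc] at hrep'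
        rw [mul_assoc]
        exact hrep'
      · exact mul_mem (list_unitary hgen) hV
      · intro k hk
        have hcolE : (fun j => (((Fx ++ Lc) ++ L).prod * V) j k)
            = Fx.prod *ᵥ (Lc.prod *ᵥ (fun r => M r k)) := by
          funext j
          rw [hprod, mul_apply_col, ← Matrix.mulVec_mulVec]
        by_cases hkd : (k : ℕ) < d
        · obtain ⟨tk, htk1, htkcol⟩ := hcols k hkd
          refine ⟨tk, htk1, fun j => ?_⟩
          have hcol : (fun r => M r k) = fun r => if r = k then wo ^ tk else 0 := funext htkcol
          have hkcd : k < cd := hkd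
          have hne : cd ≠ k := ne_of_gt hkcd
          rw [congrFun hcolE j, hcol, list_fix hLcg hkcd, replicate_igate_mulVec, if_neg hne,
            mul_zero]
          rw [Function.update_eq_self_iff.mpr (by rw [if_neg hne])]
        · have hkeq : k = cd := Fin.ext (by simp [hcd]; omega)
          refine ⟨t % 2, by omega, fun j => ?_⟩
          have hcolv : (fun r => M r k) = (fun r => (((fun x => Ar x cd) r : ℂ)
              + ((fun x => Br x cd) r : ℂ) * Complex.I) / s2 ^ Q) := by
            funext r
            rw [hkeq, hAB]
          rw [congrFun hcolE j, hcolv, hLcv, replicate_igate_mulVec, if_pos rfl,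
            I_pow_mul_wo_pow, hkeq]
          rw [Function.update_apply]
          by_cases hj : j = cd
          · rw [if_pos hj, if_pos hj]
          · simp [hj]

end GaussDev
namespace GaussDev
variable {n : ℕ}

lemma mainThm (V : Matrix (Fin n) (Fin n) ℂ) (hV : V ∈ Matrix.unitaryGroup (Fin n) ℂ)
    (A B : Matrix (Fin n) (Fin n) ℤ) (q : ℕ)
    (hW : ∀ j k, V j k = ((A j k : ℂ) + (B j k : ℂ) * Complex.I) / (Real.sqrt 2 : ℂ) ^ q) :
    ∃ L : List (Matrix (Fin n) (Fin n) ℂ),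
      (∀ G ∈ L, IsGaussGenOmega G) ∧ L.prod * V = 1 := by
  obtain ⟨L, Q, hLg, hrep, _, hcols⟩ := matLoop V hV q ⟨A, B, hW⟩ n le_rfl
  have hcols' : ∀ k : Fin n, ∃ t : ℕ, t ≤ 1 ∧
      ∀ j, (L.prod * V) j k = if j = k then wo ^ t else 0 := fun k => hcols k k.isLt
  choose tf htf1 htfcol using hcols'
  obtain ⟨Ar, Br, hAB⟩ := hrep
  have hpar : ∀ k, tf k = Q % 2 := by
    intro k
    have h1 : (L.prod * V) k k = wo ^ tf k := by rw [htfcol k k, if_pos rfl]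
    rw [hAB k k, div_eq_iff (s2_pow_ne Q)] at h1
    exact parity_det Q (tf k) (htf1 k) (Ar k k) (Br k k) (by rw [mul_comm]; exact h1.symm)
  by_cases hQ2 : Q % 2 = 0
  · refine ⟨L, fun G hG => Or.inl (hLg G hG), ?_⟩
    ext j k
    rw [htfcol k j, hpar k, hQ2, Matrix.one_apply, pow_zero]
  · have hMw : L.prod * V = wo • (1 : Matrix (Fin n) (Fin n) ℂ) := by
      ext j k
      rw [htfcol k j, hpar k, (by omega : Q % 2 = 1), Matrix.smul_apply, Matrix.one_apply]
      by_cases hjk : j = k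
      · rw [if_pos hjk, if_pos hjk, pow_one, smul_eq_mul, mul_one]
      · rw [if_neg hjk, if_neg hjk, smul_eq_mul, mul_zero]
    refine ⟨List.replicate 7 (wo • (1 : Matrix (Fin n) (Fin n) ℂ)) ++ L, ?_, ?_⟩
    · intro G hG
      rw [List.mem_append] at hG
      rcases hG with h | h
      · rw [List.eq_of_mem_replicate h]
        exact Or.inr rfl
      · exact Or.inl (hLg G h)
    · rw [List.prod_append, List.prod_replicate, mul_assoc, hMw, ← pow_succ, smul_pow,
        wo_pow8, one_pow, one_smul]

end GaussDev

/-- Every unitary matrix of the form `W/√2^q` with `W` a matrix over the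
Gaussian integers `ℤ[i]` is a product of the generators `i_[a]`, `X_[a,b]`,
`(ωH)_[a,b]`, and `ω·I_n`. -/
theorem stmt5 (n : ℕ) (hn : 1 ≤ n) (V : Matrix (Fin n) (Fin n) ℂ)
    (hV : V ∈ Matrix.unitaryGroup (Fin n) ℂ)
    (A B : Matrix (Fin n) (Fin n) ℤ) (q : ℕ)
    (hW : ∀ j k, V j k = ((A j k : ℂ) + (B j k : ℂ) * Complex.I) / (Real.sqrt 2 : ℂ) ^ q) :
    ∃ L : List (Matrix (Fin n) (Fin n) ℂ),
      (∀ G ∈ L, IsGaussGenOmega G) ∧ L.prod * V = 1 :=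
  GaussDev.mainThm V hV A B q hW
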